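/- Let s ↦ (t,x,v,a,p_t,p_x,p_v,p_a)(s) be a differentiable solution of the 1D Hamiltonian geodesic system (H1) with initial conditions t(0)=x(0)=v(0)=a(0)=0. Then p_t and p_x are constant functions, and for every s one has p_v(s) = −p_x·t(s) + p_v(0) and p_a(s) = p_x·t(s)²/2 − p_v(0)·t(s) + p_a(0). Consequently the curve γ(s) = (t,x,v,a)(s) satisfies γ'(s) = α₁(s)·(1, v(s), a(s), 0) + α₂(s)·(0,0,0,1), where α₁(s) = v(s)·p_x + a(s)·(−p_x·t(s) + p_v(0)) + p_t and α₂(s) = p_x·t(s)²/2 − p_v(0)·t(s) + p_a(0). -/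

import Mathlib

/-- For a differentiable solution of the 1D Hamiltonian geodesic
system (H1) starting with `t 0 = x 0 = v 0 = a 0 = 0`, the momenta `p_t, p_x` are
constant, `p_v (s) = -p_x · t s + p_v 0`, `p_a (s) = p_x · t s ^ 2 / 2 - p_v 0 · t s + p_a 0`,
and the projected curve `γ = (t, x, v, a)` satisfies
`γ' = α₁ · (1, v, a, 0) + α₂ · (0, 0, 0, 1)`. -/
theorem stmt_0
    (t x v a pt px pv pa : ℝ → ℝ)
    (h : ℝ → ℝ)
    (hh : ∀ s, h s = v s * px s + a s * pv s + pt s)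
    (hpt : ∀ s, HasDerivAt pt 0 s)
    (hpx : ∀ s, HasDerivAt px 0 s)
    (hpv : ∀ s, HasDerivAt pv (-(px s) * h s) s)
    (hpa : ∀ s, HasDerivAt pa (-(pv s) * h s) s)
    (ht : ∀ s, HasDerivAt t (h s) s)
    (hx : ∀ s, HasDerivAt x (v s * h s) s)
    (hv : ∀ s, HasDerivAt v (a s * h s) s)
    (ha : ∀ s, HasDerivAt a (pa s) s)
    (ht0 : t 0 = 0) (hx0 : x 0 = 0) (hv0 : v 0 = 0) (ha0 : a 0 = 0) :
    (∀ s, pt s = pt 0) ∧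
    (∀ s, px s = px 0) ∧
    (∀ s, pv s = -(px 0) * t s + pv 0) ∧
    (∀ s, pa s = px 0 * t s ^ 2 / 2 - pv 0 * t s + pa 0) ∧
    (∀ s,
      HasDerivAt t ((v s * px 0 + a s * (-(px 0) * t s + pv 0) + pt 0) * 1) s ∧
      HasDerivAt x ((v s * px 0 + a s * (-(px 0) * t s + pv 0) + pt 0) * v s) s ∧
      HasDerivAt v ((v s * px 0 + a s * (-(px 0) * t s + pv 0) + pt 0) * a s) s ∧
      HasDerivAt a (px 0 * t s ^ 2 / 2 - pv 0 * t s + pa 0) s) := by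
  have hptc : ∀ s, pt s = pt 0 := fun s =>
    is_const_of_deriv_eq_zero (fun y => (hpt y).differentiableAt)
      (fun y => (hpt y).deriv) s 0
  have hpxc : ∀ s, px s = px 0 := fun s =>
    is_const_of_deriv_eq_zero (fun y => (hpx y).differentiableAt)
      (fun y => (hpx y).deriv) s 0
  -- pv + px 0 * t is constant
  have hg : ∀ s, HasDerivAt (fun s => pv s + px 0 * t s) 0 s := by
    intro s
    have := (hpv s).add ((ht s).const_mul (px 0))
    rw [hpxc s] at this
    exact this.congr_deriv (by ring)
  have hpvc : ∀ s, pv s = -(px 0) * t s + pv 0 := by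
    intro s
    have := is_const_of_deriv_eq_zero (f := fun s => pv s + px 0 * t s)
      (fun y => (hg y).differentiableAt) (fun y => (hg y).deriv) s 0
    simp only [ht0, mul_zero, add_zero] at this
    linarith
  -- pa - (px 0 * t^2/2 - pv 0 * t) is constant
  have hg2 : ∀ s, HasDerivAt (fun s => pa s - (px 0 * t s ^ 2 / 2 - pv 0 * t s)) 0 s := by
    intro s
    have h1 : HasDerivAt (fun s => px 0 * t s ^ 2 / 2 - pv 0 * t s)
        (px 0 * (2 * t s ^ 1 * h s) / 2 - pv 0 * h s) s :=
      ((((ht s).pow 2).const_mul (px 0)).div_const 2).sub ((ht s).const_mul (pv 0))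
    have := (hpa s).sub h1
    rw [hpvc s] at this
    exact this.congr_deriv (by ring)
  have hpac : ∀ s, pa s = px 0 * t s ^ 2 / 2 - pv 0 * t s + pa 0 := by
    intro s
    have := is_const_of_deriv_eq_zero (f := fun s => pa s - (px 0 * t s ^ 2 / 2 - pv 0 * t s))
      (fun y => (hg2 y).differentiableAt) (fun y => (hg2 y).deriv) s 0
    simp only [ht0] at this
    nlinarith [this]
  have hhc : ∀ s, h s = v s * px 0 + a s * (-(px 0) * t s + pv 0) + pt 0 := by
    intro s
    rw [hh s, hpxc s, hpvc s, hptc s]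
  refine ⟨hptc, hpxc, hpvc, hpac, fun s => ⟨?_, ?_, ?_, ?_⟩⟩
  · have := ht s; rwa [hhc s, ← mul_one (_ + pt 0)] at this
  · have := hx s; rw [hhc s] at this; convert this using 1; ring
  · have := hv s; rw [hhc s] at this; convert this using 1; ring
  · have := ha s; rwa [hpac s] at this
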